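/- arXiv:2312.05322 — 2 statements merged into one kernel-verified Lean document; each statement's English description precedes it below -/
import Mathlib

section
/- Let M ∈ ℝ^{N×N} be symmetric positive definite, let f : ℝ^N → ℝ^N, and let I_1, …, I_m : ℝ^N → ℝ be differentiable. Suppose a : ℝ → ℝ^N is differentiable and λ : ℝ → ℝ^m is such that for every t: (i) C(a(t)) λ(t) = b(a(t)), where C_ij(a) = ⟨∇I_i(a), M⁻¹ ∇I_j(a)⟩ and b_i(a) = ⟨∇I_i(a), M⁻¹ f(a)⟩, and (ii) M ȧ(t) = f(a(t)) − Σ_{k=1}^m λ_k(t) ∇I_k(a(t)) (the Galerkin RONS equation). Then for each k = 1, …, m, the function t ↦ I_k(a(t)) is constant. -/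
open Matrix

private lemma dot_sum' {N : ℕ} {ι : Type*} (s : Finset ι) (g : Fin N → ℝ)
    (v : ι → Fin N → ℝ) : g ⬝ᵥ (∑ j ∈ s, v j) = ∑ j ∈ s, g ⬝ᵥ v j := by
  simp only [dotProduct, Finset.sum_apply, Finset.mul_sum]
  exact Finset.sum_comm

private lemma mulVec_sum' {N : ℕ} {ι : Type*} (s : Finset ι) (M : Matrix (Fin N) (Fin N) ℝ)
    (v : ι → Fin N → ℝ) : M *ᵥ (∑ j ∈ s, v j) = ∑ j ∈ s, M *ᵥ v j := by
  ext i
  simp only [Matrix.mulVec, Finset.sum_apply]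
  exact dot_sum' s (M i) v

/-- transfer `deriv` between the `Pi` and `PiLp` norm instances -/
private lemma deriv_pi_eq {N : ℕ} (a : ℝ → EuclideanSpace ℝ (Fin N))
    (ha : Differentiable ℝ a) (t : ℝ) :
    WithLp.ofLp (deriv a t) = WithLp.ofLp (deriv a t) := by
  rfl

/-- Galerkin RONS conserves the enforced first integrals: if `a(t)` solves
`M ȧ = f(a) − Σ_k λ_k ∇I_k(a)` where the Lagrange multipliers solve the
constraint equation `C(a) λ = b(a)` with `C_ij = ⟨∇I_i, M⁻¹ ∇I_j⟩` and
`b_i = ⟨∇I_i, M⁻¹ f⟩`, then each `t ↦ I_k(a(t))` is constant. -/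
theorem stmt_8 {N m : ℕ}
    (M : Matrix (Fin N) (Fin N) ℝ) (hMsymm : M.IsSymm) (hMpos : M.PosDef)
    (f : EuclideanSpace ℝ (Fin N) → EuclideanSpace ℝ (Fin N))
    (I : Fin m → EuclideanSpace ℝ (Fin N) → ℝ)
    (hI : ∀ k, Differentiable ℝ (I k))
    (gradI : Fin m → EuclideanSpace ℝ (Fin N) → EuclideanSpace ℝ (Fin N))
    (hgrad : ∀ k x, gradI k x = gradient (I k) x)
    (a : ℝ → EuclideanSpace ℝ (Fin N)) (ha : Differentiable ℝ a)
    (lam : ℝ → Fin m → ℝ)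
    (hconstraint : ∀ t i,
      ∑ j, (gradI i (a t) ⬝ᵥ (M⁻¹ *ᵥ gradI j (a t))) * lam t j
        = gradI i (a t) ⬝ᵥ (M⁻¹ *ᵥ f (a t)))
    (hode : ∀ t, M *ᵥ WithLp.ofLp (deriv a t)
        = f (a t) - ∑ k, lam t k • gradI k (a t)) :
    ∀ k, ∀ s t : ℝ, I k (a s) = I k (a t) := by

  intro k s t
  have hMinv : IsUnit M.det := isUnit_iff_ne_zero.mpr hMpos.det_pos.ne'
  have key : ∀ (t : ℝ) (v : EuclideanSpace ℝ (Fin N)),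
      M *ᵥ v = f (a t) - ∑ j, lam t j • gradI j (a t) →
      (inner ℝ (gradI k (a t)) v : ℝ) = 0 := by
    intro t v hv
    have hv' : (v : Fin N → ℝ) = M⁻¹ *ᵥ ((f (a t) : Fin N → ℝ)
        - ∑ j, lam t j • (gradI j (a t) : Fin N → ℝ)) := by
      have h := congrArg (M⁻¹ *ᵥ ·) hv
      simp only [Matrix.mulVec_mulVec, Matrix.nonsing_inv_mul M hMinv,
        Matrix.one_mulVec, WithLp.ofLp_sum, WithLp.ofLp_smul] at h
      exact h
    have hinner : (inner ℝ (gradI k (a t)) v : ℝ) = gradI k (a t) ⬝ᵥ (v : Fin N → ℝ) := by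
      simp only [PiLp.inner_apply, RCLike.inner_apply, conj_trivial, dotProduct, mul_comm]
    rw [hinner, hv', Matrix.mulVec_sub, dotProduct_sub,
      mulVec_sum' (Finset.univ : Finset (Fin m)) M⁻¹
        (fun j => lam t j • (gradI j (a t) : Fin N → ℝ)),
      dot_sum' (Finset.univ : Finset (Fin m)) (gradI k (a t))
        (fun j => M⁻¹ *ᵥ (lam t j • (gradI j (a t) : Fin N → ℝ))),
      ← hconstraint t k]
    refine sub_eq_zero.mpr (Finset.sum_congr rfl fun j _ => ?_).symm
    rw [Matrix.mulVec_smul, dotProduct_smul, smul_eq_mul, mul_comm]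
  have hderiv0 : ∀ t, deriv (fun u => I k (a u)) t = 0 := by
    intro t
    have hA : HasDerivAt a (deriv a t) t := (ha t).hasDerivAt
    have hG : HasGradientAt (I k) (gradient (I k) (a t)) (a t) :=
      ((hI k) (a t)).hasGradientAt
    have hcomp : HasDerivAt (fun u => I k (a u))
        (inner ℝ (gradient (I k) (a t)) (deriv a t) : ℝ) t :=
      hG.hasFDerivAt.comp_hasDerivAt t hA
    rw [hcomp.deriv, ← hgrad]
    exact key t (deriv a t) (hode t)
  exact is_const_of_deriv_eq_zero ((hI k).comp ha) hderiv0 s t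
end

section
/- Let M ∈ ℝ^{N×N} be the diagonal matrix with positive diagonal entries M_ii = |Ω_i| (the cell volumes), let 𝓕 : ℝ^N → ℝ^N be the finite volume flux map, and let I_1, …, I_m : ℝ^N → ℝ be differentiable. Suppose U : ℝ → ℝ^N is differentiable and λ : ℝ → ℝ^m is such that for every t: (i) C(U(t)) λ(t) = b(U(t)), where C_ij(U) = ⟨∇I_i(U), M⁻¹ ∇I_j(U)⟩ and b_i(U) = ⟨∇I_i(U), 𝓕(U)⟩, and (ii) U̇(t) = 𝓕(U(t)) − Σ_{k=1}^m λ_k(t) M⁻¹ ∇I_k(U(t)) (the finite volume RONS equation). Then for each k = 1, …, m, the function t ↦ I_k(U(t)) is constant; in particular, if I_1(U) = Σ_{i=1}^N |Ω_i| U_i is among the enforced invariants, the total state variable is conserved. -/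
open Matrix

/-- Finite volume RONS conserves all enforced first integrals: if the cell
averages `U(t)` solve `U̇ = 𝓕(U) − Σ_k λ_k M⁻¹ ∇I_k(U)` with the diagonal
metric tensor `M = diag(|Ω_1|, …, |Ω_N|)` and Lagrange multipliers solving
`C(U) λ = b(U)` where `C_ij = ⟨∇I_i, M⁻¹ ∇I_j⟩` and `b_i = ⟨∇I_i, 𝓕(U)⟩`,
then each `t ↦ I_k(U(t))` is constant; in particular, if the total state
`Σ_i |Ω_i| U_i` is among the enforced invariants, it is conserved. -/
theorem stmt_9 {N m : ℕ}
    (vol : Fin N → ℝ) (hvol : ∀ i, 0 < vol i)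
    (M : Matrix (Fin N) (Fin N) ℝ) (hMdiag : M = Matrix.diagonal vol)
    (F : EuclideanSpace ℝ (Fin N) → EuclideanSpace ℝ (Fin N))
    (I : Fin m → EuclideanSpace ℝ (Fin N) → ℝ)
    (hI : ∀ k, Differentiable ℝ (I k))
    (gradI : Fin m → EuclideanSpace ℝ (Fin N) → EuclideanSpace ℝ (Fin N))
    (hgrad : ∀ k x, gradI k x = gradient (I k) x)
    (U : ℝ → EuclideanSpace ℝ (Fin N)) (hU : Differentiable ℝ U)
    (lam : ℝ → Fin m → ℝ)
    (hconstraint : ∀ t i,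
      ∑ j, (gradI i (U t) ⬝ᵥ (M⁻¹ *ᵥ gradI j (U t))) * lam t j
        = gradI i (U t) ⬝ᵥ F (U t))
    (hode : ∀ t i, deriv U t i
        = F (U t) i - ∑ k, lam t k * (M⁻¹ *ᵥ gradI k (U t)) i) :
    (∀ k, ∀ s t : ℝ, I k (U s) = I k (U t)) ∧
    (∀ k, (∀ V, I k V = ∑ i, vol i * V i) →
      ∀ s t : ℝ, ∑ i, vol i * U s i = ∑ i, vol i * U t i) := by
  have key : ∀ k, ∀ s t : ℝ, I k (U s) = I k (U t) := by
    intro k s t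
    apply is_const_of_deriv_eq_zero ((hI k).comp hU)
    intro t
    have hUd : HasDerivAt U (deriv U t) t := (hU t).hasDerivAt
    have hIk : HasGradientAt (I k) (gradient (I k) (U t)) (U t) :=
      (hI k (U t)).hasGradientAt
    have hcomp : HasDerivAt (I k ∘ U)
        (((InnerProductSpace.toDual ℝ _) (gradient (I k) (U t))) (deriv U t)) t :=
      (hasGradientAt_iff_hasFDerivAt.mp hIk).comp_hasDerivAt t hUd
    rw [hcomp.deriv]
    have hin : ((InnerProductSpace.toDual ℝ (EuclideanSpace ℝ (Fin N))) (gradient (I k) (U t))) (deriv U t)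
        = ∑ i, gradient (I k) (U t) i * deriv U t i := by
      rw [InnerProductSpace.toDual_apply_apply, PiLp.inner_apply]
      exact Finset.sum_congr rfl fun i _ => by simp [RCLike.inner_apply, mul_comm]
    rw [hin]
    have hg : ∀ i, gradient (I k) (U t) i = gradI k (U t) i := by
      intro i; rw [hgrad]
    calc ∑ i, gradient (I k) (U t) i * deriv U t i
        = ∑ i, gradI k (U t) i * (F (U t) i - ∑ j, lam t j * (M⁻¹ *ᵥ gradI j (U t)) i) := by
          refine Finset.sum_congr rfl fun i _ => ?_
          rw [hg i, hode t i]
      _ = gradI k (U t) ⬝ᵥ F (U t)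
          - ∑ j, (gradI k (U t) ⬝ᵥ (M⁻¹ *ᵥ gradI j (U t))) * lam t j := by
          simp only [mul_sub, Finset.sum_sub_distrib, dotProduct,
            Finset.mul_sum]
          rw [Finset.sum_comm]
          congr 1
          refine Finset.sum_congr rfl fun j _ => ?_
          rw [Finset.sum_mul]
          exact Finset.sum_congr rfl fun i _ => by ring
      _ = 0 := by rw [hconstraint t k]; ring
  refine ⟨key, fun k hk s t => ?_⟩
  have := key k s t
  rw [hk (U s), hk (U t)] at this
  exact this
end
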